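/- Assume the lattice is minimal and elliptic and admits an elliptic sequence (s; B_0,…,B_m; Z_{B_0},…,Z_{B_m}) with C_{−1} = s and C_t = s + ∑_{i=0}^{t} Z_{B_i}. Then for every 0 ≤ j ≤ m: χ(Z_{B_j}) = 0, and (E_v, C_{j−1}) = 0 for every v ∈ B_j; in particular (E_v, s) = 0 for all v ∈ B_0 and (E_v, Z_{B_i}) = 0 for all i < j and v ∈ B_j. Consequently: (Z_{B_i}, Z_{B_j}) = 0 for all i ≠ j; χ(C_t) = 0 and χ(Z_K − C_t) = 0 for every −1 ≤ t ≤ m; and (E_v, Z_K − C_{j−1}) = (E_v,E_v)+2 for every v ∈ B_j, i.e. Z_K − C_{j−1} is the canonical cycle of the subgraph supported on B_j. -/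

import Mathlib

open scoped BigOperators

/-- A negative definite lattice on the free ℤ-module with basis indexed by `V`,
realized inside the ℚ-vector space `V → ℚ`.  The basis vector `E_v` is `Pi.single v 1`,
the symmetric bilinear form `B` takes integer values on basis vectors, is negative
definite, and has nonnegative off-diagonal entries. -/
structure LatticeData (V : Type*) [Fintype V] [DecidableEq V] where
  B : (V → ℚ) →ₗ[ℚ] (V → ℚ) →ₗ[ℚ] ℚ
  symm : ∀ x y, B x y = B y x
  int_basis : ∀ u v : V, ∃ n : ℤ, B (Pi.single u 1) (Pi.single v 1) = (n : ℚ)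
  negdef : ∀ x : V → ℚ, x ≠ 0 → B x x < 0
  offdiag : ∀ u v : V, u ≠ v → (0 : ℚ) ≤ B (Pi.single u 1) (Pi.single v 1)

variable {V : Type*} [Fintype V] [DecidableEq V]

/-- The basis vector `E_v`. -/
def Ev (v : V) : V → ℚ := Pi.single v 1

/-- `x` lies in the lattice `L` (has integral coefficients). -/
def inL (x : V → ℚ) : Prop := ∀ v, ∃ n : ℤ, x v = (n : ℚ)

/-- The support `|x|` of a cycle. -/
def supp (x : V → ℚ) : Set V := {v | x v ≠ 0}

/-- `x ∈ L'`, the dual lattice: all pairings with basis vectors are integers. -/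
def inLd (D : LatticeData V) (x : V → ℚ) : Prop := ∀ v, ∃ n : ℤ, D.B x (Ev v) = (n : ℚ)

/-- `x ∈ S'`: the antinef cone of the dual lattice. -/
def inS' (D : LatticeData V) (x : V → ℚ) : Prop := inLd D x ∧ ∀ v, D.B x (Ev v) ≤ 0

/-- The Riemann–Roch expression `χ(x) = -(x, x - Z_K)/2`. -/
def chi (D : LatticeData V) (ZK x : V → ℚ) : ℚ := -(D.B x (x - ZK)) / 2

/-- `ZK` is the (anti)canonical cycle: `(Z_K, E_v) = (E_v,E_v) + 2` for all `v`. -/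
def IsCanonical (D : LatticeData V) (ZK : V → ℚ) : Prop :=
  ∀ v, D.B ZK (Ev v) = D.B (Ev v) (Ev v) + 2

/-- The lattice is minimal: all self-intersections are at most `-2`. -/
def IsMinimal (D : LatticeData V) : Prop := ∀ v : V, D.B (Ev v) (Ev v) ≤ -2

/-- The lattice is elliptic: `χ(l) ≥ 0` for all `l ∈ L`, `l > 0`, with value 0 attained. -/
def Elliptic (D : LatticeData V) (ZK : V → ℚ) : Prop :=
  (∀ l : V → ℚ, inL l → 0 ≤ l → l ≠ 0 → 0 ≤ chi D ZK l) ∧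
  (∃ l : V → ℚ, inL l ∧ 0 ≤ l ∧ l ≠ 0 ∧ chi D ZK l = 0)

/-- The dual graph: `u ≠ v` are adjacent iff `(E_u, E_v) > 0`. -/
def dualGraph (D : LatticeData V) : SimpleGraph V where
  Adj u v := u ≠ v ∧ 0 < D.B (Ev u) (Ev v)
  symm := by
    constructor
    intro u v h
    exact ⟨h.1.symm, by rw [D.symm]; exact h.2⟩
  loopless := by
    constructor
    intro u h
    exact h.1 rfl

theorem test_preamble : True := trivial

/-- An elliptic sequence `(s; B_0 ⊇ ⋯ ⊇ B_m; Z_{B_0}, …, Z_{B_m})` for the lattice,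
following the conventions of the paper: `s` is the minimal antinef representative
of the class of `Z_K` (`s = 0` when `Z_K ∈ L`), `Bset j` is the support `B_j`,
and `Z j` is the fundamental cycle `Z_{B_j}` of `B_j` (for `0 ≤ j ≤ m`). -/
structure EllSeq (D : LatticeData V) (ZK : V → ℚ) where
  s : V → ℚ
  m : ℕ
  Bset : ℕ → Set V
  Z : ℕ → (V → ℚ)
  hs_S' : inS' D s
  hs_int : inL (ZK - s)
  hs_min : ∀ t : V → ℚ, inS' D t → inL (ZK - t) → s ≤ t
  hB0_not : ¬ inL ZK → Bset 0 = supp (ZK - s)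
  hB0_in : inL ZK → Bset 0 = Set.univ
  hmono : ∀ j, j < m → Bset (j + 1) ⊆ Bset j
  hZ_int : ∀ j, j ≤ m → inL (Z j)
  hZ_pos : ∀ j, j ≤ m → 0 ≤ Z j ∧ Z j ≠ 0
  hZ_supp : ∀ j, j ≤ m → supp (Z j) ⊆ Bset j
  hZ_anti : ∀ j, j ≤ m → ∀ u ∈ Bset j, D.B (Z j) (Ev u) ≤ 0
  hZ_min : ∀ j, j ≤ m → ∀ x : V → ℚ, inL x → 0 ≤ x → x ≠ 0 → supp x ⊆ Bset j →
      (∀ u ∈ Bset j, D.B x (Ev u) ≤ 0) → Z j ≤ x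
  hBnext : ∀ j, j < m → Bset (j + 1) = supp (ZK - s - ∑ i ∈ Finset.range (j + 1), Z i)
  hsum : ZK = s + ∑ i ∈ Finset.range (m + 1), Z i

/- ----------------------------------------------------------------- -/
/- Auxiliary lemmas                                                   -/
/- ----------------------------------------------------------------- -/

lemma B_eq_sum (D : LatticeData V) (x y : V → ℚ) :
    D.B x y = ∑ v, x v * D.B (Ev v) y := by
  have hx : x = ∑ v, x v • Ev v := by
    funext u
    simp [Ev, Finset.sum_apply, Pi.single_apply]
  conv_lhs => rw [hx]
  simp [map_sum, map_smul, LinearMap.sum_apply, LinearMap.smul_apply, smul_eq_mul]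

lemma chi_eq (D : LatticeData V) (ZK x : V → ℚ) :
    chi D ZK x = D.B x (ZK - x) / 2 := by
  simp only [chi, map_sub]
  ring

lemma chi_zero' (D : LatticeData V) (ZK : V → ℚ) : chi D ZK 0 = 0 := by
  simp [chi]

lemma chi_sub_ZK (D : LatticeData V) (ZK x : V → ℚ) :
    chi D ZK (ZK - x) = chi D ZK x := by
  simp only [chi, map_sub, LinearMap.sub_apply]
  linear_combination (D.symm ZK x) / 2

lemma chi_add (D : LatticeData V) (ZK x y : V → ℚ) :
    chi D ZK (x + y) = chi D ZK x + chi D ZK y - D.B x y := by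
  simp only [chi, map_sub, map_add, LinearMap.sub_apply, LinearMap.add_apply]
  linear_combination (D.symm x y) / 2

lemma inL_sum {ι : Type*} (s : Finset ι) (f : ι → V → ℚ) (h : ∀ i ∈ s, inL (f i)) :
    inL (∑ i ∈ s, f i) :=
  Finset.sum_induction f inL
    (fun a b ha hb v => by
      obtain ⟨n, hn⟩ := ha v; obtain ⟨k, hk⟩ := hb v
      exact ⟨n + k, by simp [Pi.add_apply, hn, hk]⟩)
    (fun v => ⟨0, by simp⟩) h

/-- The cycle `C_{t-1} = s + ∑_{i < t} Z_i`. -/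
def Cc {D : LatticeData V} {ZK : V → ℚ} (seq : EllSeq D ZK) (t : ℕ) : V → ℚ :=
  seq.s + ∑ i ∈ Finset.range t, seq.Z i

lemma Cc_zero {D : LatticeData V} {ZK : V → ℚ} (seq : EllSeq D ZK) :
    Cc seq 0 = seq.s := by simp [Cc]

lemma Cc_succ {D : LatticeData V} {ZK : V → ℚ} (seq : EllSeq D ZK) (t : ℕ) :
    Cc seq (t + 1) = Cc seq t + seq.Z t := by
  simp [Cc, Finset.sum_range_succ, add_assoc]

lemma ZK_sub_Cc {D : LatticeData V} {ZK : V → ℚ} (seq : EllSeq D ZK) (t : ℕ)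
    (ht : t ≤ seq.m + 1) :
    ZK - Cc seq t = ∑ i ∈ Finset.Ico t (seq.m + 1), seq.Z i := by
  have h2 : ZK - Cc seq t = (seq.s + ∑ i ∈ Finset.range (seq.m + 1), seq.Z i) - Cc seq t := by
    rw [← seq.hsum]
  rw [h2, Finset.sum_Ico_eq_sub _ ht]
  simp only [Cc]
  abel

lemma Sc_nonneg {D : LatticeData V} {ZK : V → ℚ} (seq : EllSeq D ZK) (t : ℕ)
    (ht : t ≤ seq.m + 1) : 0 ≤ ZK - Cc seq t := by
  rw [ZK_sub_Cc seq t ht]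
  intro v
  rw [Finset.sum_apply]
  refine Finset.sum_nonneg fun i hi => ?_
  exact (seq.hZ_pos i (Nat.lt_succ_iff.mp (Finset.mem_Ico.mp hi).2)).1 v

lemma Sc_inL {D : LatticeData V} {ZK : V → ℚ} (seq : EllSeq D ZK) (t : ℕ)
    (ht : t ≤ seq.m + 1) : inL (ZK - Cc seq t) := by
  rw [ZK_sub_Cc seq t ht]
  exact inL_sum _ _ fun i hi =>
    seq.hZ_int i (Nat.lt_succ_iff.mp (Finset.mem_Ico.mp hi).2)

lemma Sc_ne {D : LatticeData V} {ZK : V → ℚ} (seq : EllSeq D ZK) (t : ℕ)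
    (ht : t ≤ seq.m) : ZK - Cc seq t ≠ 0 := by
  intro hzero
  obtain ⟨v, hv⟩ : ∃ v, seq.Z t v ≠ 0 := by
    by_contra h; push_neg at h
    exact (seq.hZ_pos t ht).2 (funext h)
  have hle : seq.Z t v ≤ (ZK - Cc seq t) v := by
    rw [ZK_sub_Cc seq t (le_trans ht (Nat.le_succ _)), Finset.sum_apply]
    refine Finset.single_le_sum (f := fun i => seq.Z i v) (fun i hi => ?_) ?_
    · exact (seq.hZ_pos i (Nat.lt_succ_iff.mp (Finset.mem_Ico.mp hi).2)).1 v
    · exact Finset.mem_Ico.mpr ⟨le_refl t, Nat.lt_succ_of_le ht⟩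
  have hpos : 0 < seq.Z t v :=
    lt_of_le_of_ne ((seq.hZ_pos t ht).1 v) (Ne.symm hv)
  rw [hzero] at hle
  simp only [Pi.zero_apply] at hle
  linarith

lemma Sc_supp {D : LatticeData V} {ZK : V → ℚ} (seq : EllSeq D ZK) (t : ℕ)
    (ht : t ≤ seq.m) : ∀ v : V, (ZK - Cc seq t) v ≠ 0 → v ∈ seq.Bset t := by
  intro v hv
  cases t with
  | zero =>
    by_cases hZKL : inL ZK
    · rw [seq.hB0_in hZKL]; trivial
    · rw [seq.hB0_not hZKL]
      rw [Cc_zero] at hv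
      exact hv
  | succ n =>
    rw [seq.hBnext n ht]
    have he : ZK - Cc seq (n + 1) = ZK - seq.s - ∑ i ∈ Finset.range (n + 1), seq.Z i := by
      simp only [Cc]; ring
    rw [he] at hv
    exact hv

lemma Sc_supp_rev {D : LatticeData V} {ZK : V → ℚ} (seq : EllSeq D ZK) (n : ℕ)
    (hn : n < seq.m) : ∀ v : V, v ∈ seq.Bset (n + 1) → (ZK - Cc seq (n + 1)) v ≠ 0 := by
  intro v hv
  rw [seq.hBnext n hn] at hv
  have he : ZK - Cc seq (n + 1) = ZK - seq.s - ∑ i ∈ Finset.range (n + 1), seq.Z i := by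
    simp only [Cc]; ring
  rw [he]
  exact hv

/-- for a minimal elliptic lattice with an elliptic sequence, with
`C_{t-1} := s + ∑_{i < t} Z_{B_i}` (so `C_{-1} = s` and `C_m = Z_K`):
`χ(Z_{B_j}) = 0`; `(E_v, C_{j-1}) = 0` for `v ∈ B_j` (in particular `(E_v, s) = 0`
on `B_0` and `(E_v, Z_{B_i}) = 0` for `i < j`, `v ∈ B_j`); `(Z_{B_i}, Z_{B_j}) = 0`
for `i ≠ j`; `χ(C_t) = 0` and `χ(Z_K - C_t) = 0` for `-1 ≤ t ≤ m`; and
`(E_v, Z_K - C_{j-1}) = (E_v,E_v) + 2` for `v ∈ B_j`, i.e. `Z_K - C_{j-1}`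
is the canonical cycle of the subgraph supported on `B_j`. -/
theorem statement11 {V : Type*} [Fintype V] [DecidableEq V] [Nonempty V]
    (D : LatticeData V) (ZK : V → ℚ) (hZK : IsCanonical D ZK)
    (hmin : IsMinimal D) (hell : Elliptic D ZK)
    (seq : EllSeq D ZK) :
    (∀ j ≤ seq.m, chi D ZK (seq.Z j) = 0) ∧
    (∀ j ≤ seq.m, ∀ v ∈ seq.Bset j,
        D.B (Ev v) (seq.s + ∑ i ∈ Finset.range j, seq.Z i) = 0) ∧
    (∀ v ∈ seq.Bset 0, D.B (Ev v) seq.s = 0) ∧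
    (∀ i j : ℕ, i < j → j ≤ seq.m → ∀ v ∈ seq.Bset j, D.B (Ev v) (seq.Z i) = 0) ∧
    (∀ i j : ℕ, i ≤ seq.m → j ≤ seq.m → i ≠ j → D.B (seq.Z i) (seq.Z j) = 0) ∧
    (∀ t ≤ seq.m + 1,
        chi D ZK (seq.s + ∑ i ∈ Finset.range t, seq.Z i) = 0 ∧
        chi D ZK (ZK - (seq.s + ∑ i ∈ Finset.range t, seq.Z i)) = 0) ∧
    (∀ j ≤ seq.m, ∀ v ∈ seq.Bset j,
        D.B (Ev v) (ZK - (seq.s + ∑ i ∈ Finset.range j, seq.Z i)) =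
          D.B (Ev v) (Ev v) + 2) := by
  -- `χ(Z_K - C) = (Z_K - C, C)/2 = 0` whenever `(E_v, C) = 0` on `B_j`.
  have hSchi : ∀ j, j ≤ seq.m → (∀ v ∈ seq.Bset j, D.B (Ev v) (Cc seq j) = 0) →
      chi D ZK (ZK - Cc seq j) = 0 := by
    intro j hj hPj
    rw [chi_eq, sub_sub_cancel, B_eq_sum]
    have h0 : ∑ v, (ZK - Cc seq j) v * D.B (Ev v) (Cc seq j) = 0 := by
      refine Finset.sum_eq_zero fun v _ => ?_
      by_cases h : (ZK - Cc seq j) v = 0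
      · rw [h, zero_mul]
      · rw [hPj v (Sc_supp seq j hj v h), mul_zero]
    rw [h0]; norm_num
  -- the key inductive step
  have step : ∀ j, j ≤ seq.m → (∀ v ∈ seq.Bset j, D.B (Ev v) (Cc seq j) = 0) →
      chi D ZK (seq.Z j) = 0 ∧
        ∀ u : V, (ZK - Cc seq (j + 1)) u ≠ 0 → D.B (seq.Z j) (Ev u) = 0 := by
    intro j hj hPj
    have hS : chi D ZK (ZK - Cc seq j) = 0 := hSchi j hj hPj
    have hsplit : ZK - Cc seq j = seq.Z j + (ZK - Cc seq (j + 1)) := by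
      rw [Cc_succ]; ring
    rw [hsplit, chi_add] at hS
    have h1 : 0 ≤ chi D ZK (seq.Z j) :=
      hell.1 _ (seq.hZ_int j hj) (seq.hZ_pos j hj).1 (seq.hZ_pos j hj).2
    have h2 : 0 ≤ chi D ZK (ZK - Cc seq (j + 1)) := by
      rcases eq_or_lt_of_le hj with he | hlt
      · have hz : ZK - Cc seq (seq.m + 1) = 0 := by
          rw [ZK_sub_Cc seq _ le_rfl]
          simp
        rw [he, hz, chi_zero']
      · exact hell.1 _ (Sc_inL seq _ (by omega)) (Sc_nonneg seq _ (by omega))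
          (Sc_ne seq _ hlt)
    have h3each : ∀ u : V, (ZK - Cc seq (j + 1)) u * D.B (Ev u) (seq.Z j) ≤ 0 := by
      intro u
      by_cases h : (ZK - Cc seq (j + 1)) u = 0
      · rw [h, zero_mul]
      · rcases eq_or_lt_of_le hj with he | hlt
        · exfalso
          apply h
          have hz : ZK - Cc seq (seq.m + 1) = 0 := by
            rw [ZK_sub_Cc seq _ le_rfl]; simp
          rw [he, hz, Pi.zero_apply]
        · have hu1 : u ∈ seq.Bset (j + 1) := Sc_supp seq (j + 1) hlt u h
          have hu : u ∈ seq.Bset j := seq.hmono j hlt hu1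
          refine mul_nonpos_of_nonneg_of_nonpos ?_ ?_
          · exact Sc_nonneg seq (j + 1) (by omega) u
          · rw [D.symm]; exact seq.hZ_anti j hj u hu
    have h3 : D.B (seq.Z j) (ZK - Cc seq (j + 1)) ≤ 0 := by
      rw [D.symm, B_eq_sum]
      exact Finset.sum_nonpos fun u _ => h3each u
    have hchiZ : chi D ZK (seq.Z j) = 0 := by linarith
    refine ⟨hchiZ, fun u hu => ?_⟩
    have hBzero : D.B (ZK - Cc seq (j + 1)) (seq.Z j) = 0 := by
      rw [← D.symm]; linarith
    rw [B_eq_sum] at hBzero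
    have := (Finset.sum_eq_zero_iff_of_nonpos fun u _ => h3each u).1 hBzero u
      (Finset.mem_univ u)
    rw [D.symm]
    rcases mul_eq_zero.mp this with h | h
    · exact absurd h hu
    · exact h
  -- base case of the main induction
  have base : ∀ v ∈ seq.Bset 0, D.B (Ev v) (Cc seq 0) = 0 := by
    have hkey : ∀ v : V, (ZK - seq.s) v ≠ 0 → D.B (Ev v) seq.s = 0 := by
      intro v hv
      have hC0 : ZK - Cc seq 0 = ZK - seq.s := by rw [Cc_zero]
      have hge : 0 ≤ chi D ZK (ZK - Cc seq 0) :=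
        hell.1 _ (Sc_inL seq 0 (by omega)) (Sc_nonneg seq 0 (by omega))
          (Sc_ne seq 0 (by omega))
      have hexp : chi D ZK (ZK - Cc seq 0) =
          (∑ u, (ZK - seq.s) u * D.B (Ev u) seq.s) / 2 := by
        rw [chi_eq, sub_sub_cancel, Cc_zero, B_eq_sum]
      have heach : ∀ u : V, (ZK - seq.s) u * D.B (Ev u) seq.s ≤ 0 := by
        intro u
        refine mul_nonpos_of_nonneg_of_nonpos ?_ ?_
        · have := Sc_nonneg seq 0 (by omega) u
          rwa [hC0] at this
        · rw [D.symm]; exact seq.hs_S'.2 u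
      have hle : ∑ u, (ZK - seq.s) u * D.B (Ev u) seq.s ≤ 0 :=
        Finset.sum_nonpos fun u _ => heach u
      have hzero : ∑ u, (ZK - seq.s) u * D.B (Ev u) seq.s = 0 := by
        rw [hexp] at hge; linarith
      have := (Finset.sum_eq_zero_iff_of_nonpos fun u _ => heach u).1 hzero v
        (Finset.mem_univ v)
      rcases mul_eq_zero.mp this with h | h
      · exact absurd h hv
      · exact h
    intro v hv
    rw [Cc_zero]
    by_cases hZKL : inL ZK
    · -- then s = 0
      have hs_le : seq.s ≤ 0 := by
        refine seq.hs_min 0 ⟨fun u => ⟨0, by simp⟩, fun u => by simp⟩ ?_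
        simpa using hZKL
      have hss : 0 ≤ D.B seq.s seq.s := by
        rw [B_eq_sum]
        refine Finset.sum_nonneg fun u _ => ?_
        have h1 : seq.s u ≤ 0 := hs_le u
        have h2 : D.B (Ev u) seq.s ≤ 0 := by
          rw [D.symm]; exact seq.hs_S'.2 u
        nlinarith
      have hs0 : seq.s = 0 := by
        by_contra hs0
        have := D.negdef seq.s hs0
        linarith
      rw [hs0, map_zero]
    · rw [seq.hB0_not hZKL] at hv
      exact hkey v hv
  -- the main induction: `(E_v, C_{j-1}) = 0` for `v ∈ B_j`
  have main : ∀ j, j ≤ seq.m → ∀ v ∈ seq.Bset j, D.B (Ev v) (Cc seq j) = 0 := by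
    intro j
    induction j with
    | zero => intro _; exact base
    | succ n ih =>
      intro hn1 v hv
      have hnm : n < seq.m := hn1
      have hPn := ih hnm.le
      have hst := (step n hnm.le hPn).2
      have hvn : v ∈ seq.Bset n := seq.hmono n hnm hv
      have hsupp : (ZK - Cc seq (n + 1)) v ≠ 0 := Sc_supp_rev seq n hnm v hv
      have hz := hst v hsupp
      rw [Cc_succ, map_add, hPn v hvn, zero_add, D.symm]
      exact hz
  -- orthogonality `(E_v, Z_i) = 0` for `i < j`, `v ∈ B_j`
  have hBsub : ∀ a b : ℕ, a ≤ b → b ≤ seq.m → seq.Bset b ⊆ seq.Bset a := by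
    intro a b hab
    induction b with
    | zero =>
      intro _
      have : a = 0 := Nat.le_zero.mp hab
      rw [this]
    | succ n ih =>
      intro hbm
      rcases eq_or_lt_of_le hab with he | hlt
      · rw [he]
      · have h1 : a ≤ n := Nat.lt_succ_iff.mp hlt
        have h2 : n < seq.m := hbm
        exact (ih h1 h2.le).trans' (seq.hmono n h2) |>.trans (le_refl _) |>.trans (le_refl _)
  have orth : ∀ i j : ℕ, i < j → j ≤ seq.m → ∀ v ∈ seq.Bset j,
      D.B (Ev v) (seq.Z i) = 0 := by
    intro i j hij hjm v hv
    have him : i < seq.m := lt_of_lt_of_le hij hjm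
    have hv' : v ∈ seq.Bset (i + 1) := hBsub (i + 1) j hij hjm hv
    have hsupp : (ZK - Cc seq (i + 1)) v ≠ 0 := Sc_supp_rev seq i him v hv'
    have := (step i him.le (main i him.le)).2 v hsupp
    rw [D.symm]
    exact this
  -- `(Z_i, Z_j) = 0` for `i ≠ j`
  have orthZ : ∀ i j : ℕ, i ≤ seq.m → j ≤ seq.m → i ≠ j →
      D.B (seq.Z i) (seq.Z j) = 0 := by
    have key : ∀ i j : ℕ, i < j → j ≤ seq.m → D.B (seq.Z i) (seq.Z j) = 0 := by
      intro i j hij hjm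
      rw [D.symm, B_eq_sum]
      refine Finset.sum_eq_zero fun v _ => ?_
      by_cases hzv : seq.Z j v = 0
      · rw [hzv, zero_mul]
      · have hv : v ∈ seq.Bset j := seq.hZ_supp j hjm hzv
        rw [orth i j hij hjm v hv, mul_zero]
    intro i j him hjm hne
    rcases hne.lt_or_gt with h1 | h1
    · exact key i j h1 hjm
    · rw [D.symm]; exact key j i h1 him
  -- `χ(C_t) = 0` and `χ(Z_K - C_t) = 0`
  have chiC : ∀ t, t ≤ seq.m + 1 →
      chi D ZK (Cc seq t) = 0 ∧ chi D ZK (ZK - Cc seq t) = 0 := by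
    intro t ht
    have hS : chi D ZK (ZK - Cc seq t) = 0 := by
      rcases eq_or_lt_of_le ht with he | hlt
      · have h0 : ZK - Cc seq (seq.m + 1) = 0 := by
          rw [ZK_sub_Cc seq _ le_rfl]; simp
        rw [he, h0, chi_zero']
      · exact hSchi t (Nat.lt_succ_iff.mp hlt) (main t (Nat.lt_succ_iff.mp hlt))
    exact ⟨by rw [← chi_sub_ZK D ZK (Cc seq t)]; exact hS, hS⟩
  -- assemble everything
  refine ⟨fun j hj => (step j hj (main j hj)).1, main, ?_, orth, orthZ, chiC, ?_⟩
  · have := main 0 (Nat.zero_le _)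
    simpa [Cc] using this
  · intro j hj v hv
    have h1 : D.B (Ev v) (ZK - Cc seq j) = D.B (Ev v) (Ev v) + 2 := by
      rw [map_sub, main j hj v hv, sub_zero, D.symm]
      exact hZK v
    exact h1
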